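/- arXiv:math/0605377 — 3 statements merged into one kernel-verified Lean document; each statement's English description precedes it below -/
import Mathlib

section
/- Let P(x) = Σ_{i=0}^n C(n,i) a_i x^i and Q(x) = Σ_{i=0}^n C(n,i) b_i x^i be complex polynomials. Define K_s = Σ_{q=0}^s C(s,q) a_q and L_r = Σ_{q=0}^r C(r,q) b_{q+n-r}. Then Σ_{j=0}^n (-1)^j C(n,j) K_j L_{n-j} = Σ_{j=0}^n (-1)^j C(n,j) a_j b_j, i.e. this sum equals (P∗Q)(-1). -/
open Polynomial Finset

/-- Schur-Szegő composition of two polynomials of degree at most `n`: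
if `P = ∑ C(n,i) aᵢ xⁱ` and `Q = ∑ C(n,i) bᵢ xⁱ` then `P ∗ Q = ∑ C(n,i) aᵢ bᵢ xⁱ`. -/
noncomputable def schurSzego {K : Type*} [Field K] (n : ℕ) (P Q : Polynomial K) :
    Polynomial K :=
  ∑ i ∈ Finset.range (n + 1),
    Polynomial.C (P.coeff i * Q.coeff i / (n.choose i : K)) * Polynomial.X ^ i


lemma altC (m : ℕ) : (∑ t ∈ Finset.range (m+1), (-1:ℂ)^t * (m.choose t : ℂ)) = if m = 0 then 1 else 0 := by
  have h := Int.alternating_sum_range_choose (n := m)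
  have h2 := congrArg (fun z : ℤ => (z : ℂ)) h
  push_cast at h2
  simpa [apply_ite] using h2

lemma SSinner_sum (n u v : ℕ) (hv : v ≤ n) :
    (∑ j ∈ Finset.range (n+1), (-1:ℂ)^j * (n.choose j : ℂ) * (j.choose u : ℂ) *
      (if j ≤ v then ((n-j).choose (v-j) : ℂ) else 0))
    = if u = v then (-1:ℂ)^u * (n.choose u : ℂ) else 0 := by
  have hstep1 : (∑ j ∈ Finset.range (n+1), (-1:ℂ)^j * (n.choose j : ℂ) * (j.choose u : ℂ) *
      (if j ≤ v then ((n-j).choose (v-j) : ℂ) else 0))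
      = ∑ j ∈ Finset.range (v+1), (-1:ℂ)^j * (n.choose j : ℂ) * (j.choose u : ℂ) *
        ((n-j).choose (v-j) : ℂ) := by
    rw [show (v:ℕ)+1 = v+1 from rfl]
    refine (Finset.sum_subset (show Finset.range (v+1) ⊆ Finset.range (n+1) from Finset.range_subset_range.2 (by omega)) ?_).symm.trans ?_
    · intro j hj hj2
      simp only [Finset.mem_range] at hj hj2
      rw [if_neg (by omega), mul_zero]
    · apply Finset.sum_congr rfl
      intro j hj
      rw [if_pos (by simp only [Finset.mem_range] at hj; omega)]
  rw [hstep1]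
  by_cases huv : v < u
  · rw [if_neg (by omega)]
    apply Finset.sum_eq_zero
    intro j hj
    simp only [Finset.mem_range] at hj
    rw [Nat.choose_eq_zero_of_lt (show j < u by omega)]
    push_cast; ring
  · push_neg at huv
    have hstep2 : (∑ j ∈ Finset.range (v+1), (-1:ℂ)^j * (n.choose j : ℂ) * (j.choose u : ℂ) *
        ((n-j).choose (v-j) : ℂ))
        = ∑ j ∈ Finset.Ico u (v+1), (-1:ℂ)^j * (n.choose j : ℂ) * (j.choose u : ℂ) *
          ((n-j).choose (v-j) : ℂ) := by
      refine (Finset.sum_subset ?_ ?_).symm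
      · intro j hj; simp only [Finset.mem_Ico, Finset.mem_range] at hj ⊢; omega
      · intro j hj hj2
        simp only [Finset.mem_Ico, Finset.mem_range] at hj hj2
        rw [Nat.choose_eq_zero_of_lt (show j < u by omega)]
        push_cast; ring
    rw [hstep2, Finset.sum_Ico_eq_sum_range]
    have hr : v + 1 - u = (v - u) + 1 := by omega
    rw [hr]
    have hterm : ∀ t ∈ Finset.range ((v-u)+1),
        (-1:ℂ)^(u+t) * (n.choose (u+t) : ℂ) * ((u+t).choose u : ℂ) *
          ((n-(u+t)).choose (v-(u+t)) : ℂ)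
        = ((-1:ℂ)^u * (n.choose u : ℂ) * ((n-u).choose (v-u) : ℂ)) *
          ((-1:ℂ)^t * ((v-u).choose t : ℂ)) := by
      intro t ht
      simp only [Finset.mem_range] at ht
      have e1 : n - (u+t) = n - u - t := by omega
      have e2 : v - (u+t) = v - u - t := by omega
      rw [e1, e2, pow_add]
      have h1 : n.choose (u+t) * ((u+t).choose u) = n.choose u * ((n-u).choose t) := by
        rw [Nat.choose_mul (Nat.le_add_right u t)]
        congr 1
        · congr 1; omega
      have h2 : (n-u).choose t * ((n-u-t).choose (v-u-t)) = (n-u).choose (v-u) * ((v-u).choose t) := by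
        rw [Nat.choose_mul (by omega)]
      have h1' : (n.choose (u+t) : ℂ) * ((u+t).choose u : ℂ) = (n.choose u : ℂ) * ((n-u).choose t : ℂ) := by
        exact_mod_cast congrArg (Nat.cast : ℕ → ℂ) h1
      have h2' : ((n-u).choose t : ℂ) * ((n-u-t).choose (v-u-t) : ℂ)
          = ((n-u).choose (v-u) : ℂ) * ((v-u).choose t : ℂ) := by
        exact_mod_cast congrArg (Nat.cast : ℕ → ℂ) h2
      linear_combination ((-1:ℂ)^u * (-1:ℂ)^t) *
        (((n-u-t).choose (v-u-t) : ℂ) * h1' + (n.choose u : ℂ) * h2')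
    rw [Finset.sum_congr rfl hterm, ← Finset.mul_sum, altC (v - u)]
    by_cases h : u = v
    · subst h
      simp
    · rw [if_neg h, if_neg (by omega), mul_zero]


private theorem SS_part1 (n : ℕ) (a b : ℕ → ℂ)
    (K : ℕ → ℂ) (L : ℕ → ℂ)
    (hK : ∀ s, K s = ∑ q ∈ Finset.range (s + 1), (s.choose q : ℂ) * a q)
    (hL : ∀ r, L r = ∑ q ∈ Finset.range (r + 1), (r.choose q : ℂ) * b (q + n - r)) :
    (∑ j ∈ Finset.range (n + 1), (-1 : ℂ) ^ j * (n.choose j : ℂ) * K j * L (n - j)) =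
      (∑ j ∈ Finset.range (n + 1), (-1 : ℂ) ^ j * (n.choose j : ℂ) * a j * b j) := by
  have hKn : ∀ j, j ≤ n → K j = ∑ u ∈ Finset.range (n+1), (j.choose u : ℂ) * a u := by
    intro j hj
    rw [hK]
    refine Finset.sum_subset (Finset.range_subset_range.2 (by omega)) ?_
    intro u hu hu2
    simp only [Finset.mem_range] at hu hu2
    rw [Nat.choose_eq_zero_of_lt (show j < u by omega)]
    push_cast; ring
  have hLn : ∀ j, j ≤ n →
      L (n-j) = ∑ v ∈ Finset.range (n+1),
        (if j ≤ v then ((n-j).choose (v-j) : ℂ) else 0) * b v := by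
    intro j hj
    rw [hL]
    have h1 : (∑ v ∈ Finset.range (n+1), (if j ≤ v then ((n-j).choose (v-j):ℂ) else 0) * b v)
        = ∑ v ∈ Finset.Ico j (n+1), ((n-j).choose (v-j) : ℂ) * b v := by
      refine ((Finset.sum_subset
        (show Finset.Ico j (n+1) ⊆ Finset.range (n+1) by
          intro x hx; simp only [Finset.mem_Ico, Finset.mem_range] at hx ⊢; omega) ?_).symm).trans ?_
      · intro v hv hv2
        simp only [Finset.mem_range, Finset.mem_Ico] at hv hv2
        rw [if_neg (by omega), zero_mul]
      · apply Finset.sum_congr rfl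
        intro v hv
        simp only [Finset.mem_Ico] at hv
        rw [if_pos hv.1]
    rw [h1, Finset.sum_Ico_eq_sum_range]
    rw [show n + 1 - j = (n - j) + 1 by omega]
    apply Finset.sum_congr rfl
    intro q hq
    simp only [Finset.mem_range] at hq
    rw [show j + q - j = q by omega, show q + n - (n - j) = j + q by omega]
  calc (∑ j ∈ Finset.range (n + 1), (-1 : ℂ) ^ j * (n.choose j : ℂ) * K j * L (n - j))
      = ∑ j ∈ Finset.range (n+1), ∑ u ∈ Finset.range (n+1), ∑ v ∈ Finset.range (n+1),
          a u * b v * ((-1:ℂ)^j * (n.choose j : ℂ) * (j.choose u : ℂ) *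
            (if j ≤ v then ((n-j).choose (v-j) : ℂ) else 0)) := by
        apply Finset.sum_congr rfl
        intro j hj
        simp only [Finset.mem_range] at hj
        rw [hKn j (by omega), hLn j (by omega), mul_assoc, Finset.sum_mul_sum, Finset.mul_sum]
        apply Finset.sum_congr rfl
        intro u _
        rw [Finset.mul_sum]
        apply Finset.sum_congr rfl
        intro v _
        ring
    _ = ∑ u ∈ Finset.range (n+1), ∑ v ∈ Finset.range (n+1), ∑ j ∈ Finset.range (n+1),
          a u * b v * ((-1:ℂ)^j * (n.choose j : ℂ) * (j.choose u : ℂ) *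
            (if j ≤ v then ((n-j).choose (v-j) : ℂ) else 0)) := by
        rw [Finset.sum_comm]
        apply Finset.sum_congr rfl
        intro u _
        rw [Finset.sum_comm]
    _ = ∑ u ∈ Finset.range (n+1), ∑ v ∈ Finset.range (n+1),
          a u * b v * (if u = v then (-1:ℂ)^u * (n.choose u : ℂ) else 0) := by
        apply Finset.sum_congr rfl
        intro u _
        apply Finset.sum_congr rfl
        intro v hv
        simp only [Finset.mem_range] at hv
        rw [← Finset.mul_sum]
        congr 1
        exact SSinner_sum n u v (by omega)
    _ = ∑ u ∈ Finset.range (n+1), a u * b u * ((-1:ℂ)^u * (n.choose u : ℂ)) := by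
        apply Finset.sum_congr rfl
        intro u hu
        simp only [mul_ite, mul_zero]
        rw [Finset.sum_ite_eq, if_pos hu]
    _ = ∑ j ∈ Finset.range (n + 1), (-1 : ℂ) ^ j * (n.choose j : ℂ) * a j * b j := by
        apply Finset.sum_congr rfl
        intro j _
        ring


open Polynomial in
private theorem SS_part2 (n : ℕ) (a b : ℕ → ℂ) :
    (∑ j ∈ Finset.range (n + 1), (-1 : ℂ) ^ j * (n.choose j : ℂ) * a j * b j) =
      (schurSzego n
        (∑ i ∈ Finset.range (n + 1), Polynomial.C ((n.choose i : ℂ) * a i) * Polynomial.X ^ i)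
        (∑ i ∈ Finset.range (n + 1), Polynomial.C ((n.choose i : ℂ) * b i) * Polynomial.X ^ i)).eval
        (-1) := by
  have hco : ∀ (c : ℕ → ℂ), ∀ i ∈ Finset.range (n+1),
      (∑ k ∈ Finset.range (n + 1), Polynomial.C ((n.choose k : ℂ) * c k) * Polynomial.X ^ k).coeff i
        = (n.choose i : ℂ) * c i := by
    intro c i hi
    rw [Polynomial.finset_sum_coeff]
    simp only [Polynomial.coeff_C_mul, Polynomial.coeff_X_pow, mul_ite, mul_one, mul_zero]
    rw [Finset.sum_ite_eq, if_pos hi]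
  rw [schurSzego, Polynomial.eval_finset_sum]
  apply Finset.sum_congr rfl
  intro i hi
  rw [hco a i hi, hco b i hi]
  simp only [Polynomial.eval_mul, Polynomial.eval_C, Polynomial.eval_pow, Polynomial.eval_X]
  have hne : (n.choose i : ℂ) ≠ 0 := by
    simp only [Finset.mem_range] at hi
    exact_mod_cast (Nat.choose_pos (by omega : i ≤ n)).ne'
  field_simp

theorem schurSzego_bilinear_identity (n : ℕ) (a b : ℕ → ℂ)
    (K : ℕ → ℂ) (L : ℕ → ℂ)
    (hK : ∀ s, K s = ∑ q ∈ Finset.range (s + 1), (s.choose q : ℂ) * a q)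
    (hL : ∀ r, L r = ∑ q ∈ Finset.range (r + 1), (r.choose q : ℂ) * b (q + n - r)) :
    (∑ j ∈ Finset.range (n + 1), (-1 : ℂ) ^ j * (n.choose j : ℂ) * K j * L (n - j)) =
      (∑ j ∈ Finset.range (n + 1), (-1 : ℂ) ^ j * (n.choose j : ℂ) * a j * b j) ∧
    (∑ j ∈ Finset.range (n + 1), (-1 : ℂ) ^ j * (n.choose j : ℂ) * a j * b j) =
      (schurSzego n
        (∑ i ∈ Finset.range (n + 1), Polynomial.C ((n.choose i : ℂ) * a i) * Polynomial.X ^ i)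
        (∑ i ∈ Finset.range (n + 1), Polynomial.C ((n.choose i : ℂ) * b i) * Polynomial.X ^ i)).eval
        (-1) := by
  constructor
  · exact SS_part1 n a b K L hK hL
  · exact SS_part2 n a b
end

section
/- Let P, Q be complex polynomials of degree n, let x_P be a root of P of multiplicity m_P and x_Q a root of Q of multiplicity m_Q, and suppose μ* := m_P + m_Q − n > 0. Then −x_P·x_Q is a root of the Schur-Szegő composition P∗Q of multiplicity at least μ*. -/
open Polynomial Finset

namespace SchurAux

/-- Key arithmetic identity. -/
lemma nat_key (n k i : ℕ) (hk : k ≤ n) (hi : i ≤ n) :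
    k.choose i * n.factorial = n.choose i * k.factorial * (n - i).descFactorial (n - k) := by
  rcases le_or_gt i k with h | h
  · have h1 : (k - i).factorial * (n - i).descFactorial (n - k) = (n - i).factorial := by
      have h0 := Nat.factorial_mul_descFactorial (n := n - i) (k := n - k) (by omega)
      rwa [show n - i - (n - k) = k - i by omega] at h0
    have h2 : k.choose i * i.factorial * (k - i).factorial = k.factorial :=
      Nat.choose_mul_factorial_mul_factorial h
    have h3 : n.choose i * i.factorial * (n - i).factorial = n.factorial :=
      Nat.choose_mul_factorial_mul_factorial hi
    apply Nat.eq_of_mul_eq_mul_right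
      (Nat.mul_pos (Nat.factorial_pos (k - i)) (Nat.factorial_pos i))
    calc k.choose i * n.factorial * ((k - i).factorial * i.factorial)
        = (k.choose i * i.factorial * (k - i).factorial) * n.factorial := by ring
      _ = k.factorial * n.factorial := by rw [h2]
      _ = (n.choose i * i.factorial * (n - i).factorial) * k.factorial := by rw [h3]; ring
      _ = (n.choose i * i.factorial * ((k - i).factorial * (n - i).descFactorial (n - k)))
            * k.factorial := by rw [h1]
      _ = n.choose i * k.factorial * (n - i).descFactorial (n - k)
            * ((k - i).factorial * i.factorial) := by ring
  · rw [Nat.choose_eq_zero_of_lt h,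
      Nat.descFactorial_eq_zero_iff_lt.mpr (by omega)]
    simp

lemma pow_dvd_derivative {R : Type*} [CommRing R] {g f : R[X]} {m : ℕ}
    (h : g ^ m ∣ f) : g ^ (m - 1) ∣ derivative f := by
  obtain ⟨h', rfl⟩ := h
  rcases m with _ | m
  · simp
  · rw [derivative_mul, derivative_pow]
    simp only [Nat.add_sub_cancel]
    refine dvd_add ?_ ?_
    · exact ((dvd_mul_left (g ^ m) _).mul_right _).mul_right _
    · exact ((pow_dvd_pow g (Nat.le_succ m)).mul_right _)

lemma pow_dvd_iterate_derivative {R : Type*} [CommRing R] {g f : R[X]} {m : ℕ} (d : ℕ)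
    (h : g ^ m ∣ f) : g ^ (m - d) ∣ derivative^[d] f := by
  induction d generalizing f m with
  | zero => simpa using h
  | succ d ih =>
      rw [Function.iterate_succ_apply]
      have h2 := ih (pow_dvd_derivative h)
      rwa [show m - 1 - d = m - (d + 1) by omega] at h2

/-- `theta P = ∑ P.coeff i • Xᵢ Yᵢ` : homogenization helper. -/
noncomputable def theta (A : Polynomial ℂ) : Polynomial (Polynomial ℂ) :=
  (A.map (C : ℂ →+* Polynomial ℂ)).comp (C X * X)

lemma theta_mul (A B : Polynomial ℂ) : theta (A * B) = theta A * theta B := by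
  simp [theta, Polynomial.map_mul, mul_comp]

lemma theta_pow (A : Polynomial ℂ) (m : ℕ) : theta (A ^ m) = theta A ^ m := by
  simp [theta, Polynomial.map_pow, pow_comp]

lemma theta_X_sub_C (a : ℂ) : theta (X - C a) = C X * X - C (C a) := by
  simp [theta, Polynomial.map_sub, sub_comp]

lemma theta_natDegree_le (A : Polynomial ℂ) : (theta A).natDegree ≤ A.natDegree := by
  refine natDegree_comp_le.trans ?_
  have h2 : (C (X : Polynomial ℂ) * X).natDegree = 1 := by
    simpa using natDegree_C_mul_X (X : Polynomial ℂ) X_ne_zero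
  rw [h2, mul_one]
  exact natDegree_map_le

lemma theta_eq_sum (A : Polynomial ℂ) (N : ℕ) (hA : A.natDegree < N + 1) :
    theta A = ∑ i ∈ range (N + 1), C (C (A.coeff i) * X ^ i) * X ^ i := by
  conv_lhs => rw [A.as_sum_range' (N + 1) hA]
  unfold theta
  rw [show ((∑ i ∈ range (N + 1), monomial i (A.coeff i)).map (C : ℂ →+* Polynomial ℂ))
      = ∑ i ∈ range (N + 1), (monomial i (A.coeff i)).map (C : ℂ →+* Polynomial ℂ) by
    rw [← Polynomial.coe_mapRingHom, map_sum]]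
  rw [Polynomial.comp, eval₂_finset_sum]
  refine Finset.sum_congr rfl fun i _ => ?_
  rw [Polynomial.map_monomial, ← Polynomial.comp, monomial_comp]
  rw [mul_pow, ← C_pow, ← mul_assoc, ← C_mul]

lemma reflect_sum' {ι : Type*} (N : ℕ) (s : Finset ι) (f : ι → Polynomial (Polynomial ℂ)) :
    reflect N (∑ i ∈ s, f i) = ∑ i ∈ s, reflect N (f i) := by
  classical
  induction s using Finset.induction with
  | empty => simp
  | insert _ _ h ih => rw [Finset.sum_insert h, Finset.sum_insert h, reflect_add, ih]

lemma F_eq (P : Polynomial ℂ) (n : ℕ) (hP : P.natDegree ≤ n) :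
    reflect n (theta P) = ∑ i ∈ range (n + 1), C (C (P.coeff i) * X ^ i) * X ^ (n - i) := by
  rw [theta_eq_sum P n (Nat.lt_succ_of_le hP), reflect_sum']
  refine Finset.sum_congr rfl fun i hi => ?_
  rw [reflect_C_mul_X_pow, revAt_le (Finset.mem_range_succ_iff.mp hi)]

lemma reflect_pow_linear (g : Polynomial (Polynomial ℂ)) (hg : g.natDegree ≤ 1) (m : ℕ) :
    reflect m (g ^ m) = (reflect 1 g) ^ m := by
  induction m with
  | zero => simp
  | succ m ih =>
      have hgm : (g ^ m).natDegree ≤ m := by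
        refine natDegree_pow_le.trans ?_
        calc m * g.natDegree ≤ m * 1 := Nat.mul_le_mul_left m hg
          _ = m := Nat.mul_one m
      rw [pow_succ, pow_succ, reflect_mul (g ^ m) g hgm hg, ih]

lemma reflect_one_linear (a : ℂ) :
    reflect 1 (C (X : Polynomial ℂ) * X - C (C a)) = C X - C (C a) * X := by
  rw [reflect_sub, reflect_C]
  have h : reflect 1 (C (X : Polynomial ℂ) * X) = C X := by
    have h0 := reflect_C_mul_X_pow (R := Polynomial ℂ) 1 1 (c := X)
    simpa using h0
  rw [h, pow_one]

lemma F_factor (P R : Polynomial ℂ) (n mP : ℕ) (xP : ℂ)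
    (hP : P = (X - C xP) ^ mP * R) (hR : R.natDegree ≤ n - mP) (hm : mP ≤ n) :
    (C (X : Polynomial ℂ) - C (C xP) * X) ^ mP ∣ reflect n (theta P) := by
  refine ⟨reflect (n - mP) (theta R), ?_⟩
  have h1 : theta P = ((C (X : Polynomial ℂ) * X - C (C xP)) ^ mP) * theta R := by
    rw [hP, theta_mul, theta_pow, theta_X_sub_C]
  have hd1 : (((C (X : Polynomial ℂ) * X - C (C xP)) ^ mP)).natDegree ≤ mP := by
    refine natDegree_pow_le.trans ?_
    have : (C (X : Polynomial ℂ) * X - C (C xP)).natDegree ≤ 1 := by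
      refine (natDegree_sub_le _ _).trans ?_
      simp [natDegree_C_mul_X (X : Polynomial ℂ) X_ne_zero]
    calc mP * (C (X : Polynomial ℂ) * X - C (C xP)).natDegree ≤ mP * 1 :=
          Nat.mul_le_mul_left mP this
      _ = mP := Nat.mul_one mP
  have hrm := reflect_mul ((C (X : Polynomial ℂ) * X - C (C xP)) ^ mP) (theta R) hd1
    ((theta_natDegree_le R).trans hR)
  rw [show mP + (n - mP) = n by omega] at hrm
  rw [h1, hrm,
    reflect_pow_linear _ (by
      refine (natDegree_sub_le _ _).trans ?_
      simp [natDegree_C_mul_X (X : Polynomial ℂ) X_ne_zero]) mP,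
    reflect_one_linear]

lemma eval_deriv_F (P : Polynomial ℂ) (n k : ℕ) (b : ℂ) (hP : P.natDegree ≤ n) :
    eval (C b) (derivative^[n - k] (reflect n (theta P))) =
      ∑ i ∈ range (n + 1),
        C (P.coeff i * ((n - i).descFactorial (n - k) : ℂ) * b ^ ((n - i) - (n - k))) * X ^ i := by
  rw [F_eq P n hP, iterate_derivative_sum, eval_finset_sum]
  refine Finset.sum_congr rfl fun i _ => ?_
  rw [iterate_derivative_C_mul, iterate_derivative_X_pow_eq_smul,
    smul_eq_C_mul]
  rw [eval_mul, eval_mul, eval_C, eval_C, eval_pow, eval_X]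
  rw [show ((((n - i).descFactorial (n - k) : ℕ)) : Polynomial ℂ)
      = C (((n - i).descFactorial (n - k) : ℕ) : ℂ) by simp, C_mul, C_mul, C_pow]
  ring

lemma schurSzego_basis (P : Polynomial ℂ) (n k : ℕ) (q : ℂ) (hk : k ≤ n)
    (hP : P.natDegree ≤ n) :
    schurSzego n P ((X - C q) ^ k) =
      C ((k.factorial : ℂ) / (n.factorial : ℂ)) *
        eval (C (-q)) (derivative^[n - k] (reflect n (theta P))) := by
  rw [eval_deriv_F P n k (-q) hP, Finset.mul_sum]
  unfold schurSzego
  refine Finset.sum_congr rfl fun i hi => ?_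
  have hi' : i ≤ n := Finset.mem_range_succ_iff.mp hi
  have hcoeff : ((X - C q) ^ k).coeff i = (-q) ^ (k - i) * (k.choose i : ℂ) := by
    rw [show (X - C q) = X + C (-q) by rw [map_neg]; ring, coeff_X_add_C_pow]
  rw [hcoeff]
  simp only [← mul_assoc, ← C_mul]
  congr 1
  rw [C_inj]
  rcases le_or_gt i k with h | h
  · rw [show (n - i) - (n - k) = k - i by omega]
    have hnat : ((k.choose i : ℂ)) * (n.factorial : ℂ)
        = (n.choose i : ℂ) * (k.factorial : ℂ) * (((n - i).descFactorial (n - k) : ℕ) : ℂ) := by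
      exact_mod_cast congrArg (fun x : ℕ => (x : ℂ)) (nat_key n k i hk hi')
    have h1 : ((n.choose i : ℂ)) ≠ 0 := by
      exact_mod_cast (Nat.choose_pos hi').ne'
    have h2 : ((n.factorial : ℂ)) ≠ 0 := by
      exact_mod_cast (Nat.factorial_pos n).ne'
    field_simp
    linear_combination (P.coeff i * (-q) ^ (k - i)) * hnat
  · rw [Nat.choose_eq_zero_of_lt h,
      Nat.descFactorial_eq_zero_iff_lt.mpr (show n - i < n - k by omega)]
    simp

lemma schurSzego_zero_right {K : Type*} [Field K] (n : ℕ) (P : Polynomial K) :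
    schurSzego n P 0 = 0 := by
  simp [schurSzego]

lemma schurSzego_C_mul_right {K : Type*} [Field K] (n : ℕ) (P : Polynomial K) (c : K)
    (Q : Polynomial K) : schurSzego n P (C c * Q) = C c * schurSzego n P Q := by
  unfold schurSzego
  rw [Finset.mul_sum]
  refine Finset.sum_congr rfl fun i _ => ?_
  rw [coeff_C_mul]
  simp only [← mul_assoc, ← C_mul]
  congr 1
  rw [C_inj]
  ring

lemma schurSzego_sum_right {K : Type*} [Field K] (n : ℕ) (P : Polynomial K)
    {ι : Type*} (s : Finset ι) (f : ι → Polynomial K) :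
    schurSzego n P (∑ j ∈ s, f j) = ∑ j ∈ s, schurSzego n P (f j) := by
  unfold schurSzego
  calc (∑ i ∈ range (n + 1), C (P.coeff i * (∑ j ∈ s, f j).coeff i / (n.choose i : K)) * X ^ i)
      = ∑ i ∈ range (n + 1), ∑ j ∈ s,
          C (P.coeff i * (f j).coeff i / (n.choose i : K)) * X ^ i := by
        refine Finset.sum_congr rfl fun i _ => ?_
        rw [finset_sum_coeff, Finset.mul_sum, Finset.sum_div, map_sum, Finset.sum_mul]
    _ = _ := Finset.sum_comm

lemma key (n k mP : ℕ) (P : Polynomial ℂ) (xP q : ℂ) (hk : k ≤ n)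
    (hPd : P.natDegree ≤ n) (hdvd : (X - C xP) ^ mP ∣ P) :
    (X - C (-(xP * q))) ^ (mP + k - n) ∣ schurSzego n P ((X - C q) ^ k) := by
  by_cases hm : mP + k ≤ n
  · rw [show mP + k - n = 0 by omega, pow_zero]
    exact one_dvd _
  push_neg at hm
  by_cases hP0 : P = 0
  · subst hP0
    simp [schurSzego]
  have hmn : mP ≤ n := by
    have h1 : ((X - C xP) ^ mP).natDegree ≤ P.natDegree := natDegree_le_of_dvd hdvd hP0
    rw [natDegree_pow, natDegree_X_sub_C, mul_one] at h1
    exact h1.trans hPd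
  obtain ⟨R, hR⟩ := hdvd
  have hXC : ((X - C xP) ^ mP : Polynomial ℂ) ≠ 0 := pow_ne_zero _ (X_sub_C_ne_zero xP)
  have hR0 : R ≠ 0 := by
    rintro rfl
    rw [mul_zero] at hR
    exact hP0 hR
  have hRd : R.natDegree ≤ n - mP := by
    have hmul := natDegree_mul hXC hR0
    rw [← hR, natDegree_pow, natDegree_X_sub_C, mul_one] at hmul
    omega
  have hfac := F_factor P R n mP xP hR hRd hmn
  have hdvd2 : (C (X : Polynomial ℂ) - C (C xP) * X) ^ (mP - (n - k)) ∣
      derivative^[n - k] (reflect n (theta P)) :=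
    pow_dvd_iterate_derivative _ hfac
  have hdvd3 := map_dvd (evalRingHom (C (-q) : Polynomial ℂ)) hdvd2
  rw [map_pow] at hdvd3
  have heval : (evalRingHom (C (-q) : Polynomial ℂ))
      (C (X : Polynomial ℂ) - C (C xP) * X) = X - C (-(xP * q)) := by
    simp only [coe_evalRingHom, eval_sub, eval_mul, eval_C, eval_X]
    rw [← C_mul, show xP * -q = -(xP * q) by ring]
  rw [heval] at hdvd3
  rw [schurSzego_basis P n k q hk hPd, show mP + k - n = mP - (n - k) by omega]
  exact hdvd3.mul_left _

end SchurAux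

theorem schurSzego_mult_lower_bound (n : ℕ) (P Q : Polynomial ℂ)
    (hP : P.natDegree = n) (hQ : Q.natDegree = n)
    (xP xQ : ℂ) (mP mQ : ℕ)
    (hmP : (Polynomial.X - Polynomial.C xP) ^ mP ∣ P)
    (hmQ : (Polynomial.X - Polynomial.C xQ) ^ mQ ∣ Q)
    (hμ : n < mP + mQ) :
    (Polynomial.X - Polynomial.C (-(xP * xQ))) ^ (mP + mQ - n) ∣ schurSzego n P Q := by
  by_cases hQ0 : Q = 0
  · subst hQ0
    simp [schurSzego]
  have hQd : Q.natDegree ≤ n := hQ.le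
  have hmQn : mQ ≤ n := by
    have h1 : ((X - C xQ) ^ mQ).natDegree ≤ Q.natDegree := natDegree_le_of_dvd hmQ hQ0
    rw [natDegree_pow, natDegree_X_sub_C, mul_one] at h1
    exact h1.trans hQd
  obtain ⟨S, hS⟩ := hmQ
  have hXC : ((X - C xQ) ^ mQ : Polynomial ℂ) ≠ 0 := pow_ne_zero _ (X_sub_C_ne_zero xQ)
  have hS0 : S ≠ 0 := by
    rintro rfl
    rw [mul_zero] at hS
    exact hQ0 hS
  have hSd : S.natDegree ≤ n - mQ := by
    have hmul := natDegree_mul hXC hS0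
    rw [← hS, natDegree_pow, natDegree_X_sub_C, mul_one] at hmul
    omega
  have hQsum : Q = ∑ t ∈ range (n - mQ + 1),
      C ((taylor xQ S).coeff t) * (X - C xQ) ^ (mQ + t) := by
    calc Q = (X - C xQ) ^ mQ * S := hS
      _ = (X - C xQ) ^ mQ * ∑ t ∈ range (n - mQ + 1),
            C ((taylor xQ S).coeff t) * (X - C xQ) ^ t := by
          congr 1
          conv_lhs => rw [← sum_taylor_eq S xQ]
          rw [Polynomial.sum_over_range' _ (by simp) (n - mQ + 1)
            (by rw [natDegree_taylor]; omega)]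
      _ = _ := by
          rw [Finset.mul_sum]
          refine Finset.sum_congr rfl fun t _ => ?_
          rw [pow_add]
          ring
  rw [hQsum, SchurAux.schurSzego_sum_right]
  refine Finset.dvd_sum fun t ht => ?_
  rw [SchurAux.schurSzego_C_mul_right]
  refine Dvd.dvd.mul_left ?_ _
  have hkn : mQ + t ≤ n := by
    have := Finset.mem_range.mp ht
    omega
  have h1 := SchurAux.key n (mQ + t) mP P xP xQ hkn hP.le hmP
  exact (pow_dvd_pow _ (by omega)).trans h1
end

section
/- If P is a real hyperbolic polynomial of degree n (all roots real) and Q is a real polynomial of degree n all of whose roots are real and negative, then P∗Q is hyperbolic, i.e., all roots of P∗Q are real; moreover every root of P∗Q lies in the interval [−M, −m], where M is the maximum and m the minimum over all products α·β with α a root of P and β a root of Q. -/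
open Polynomial Finset

namespace SchurSzegoAux

open Complex

/- ### Cauchy--Schwarz for multisets -/

lemma ms_cs (s : Multiset ℝ) (hs : ∀ x ∈ s, 0 ≤ x) :
    s.sum ^ 2 ≤ s.card * (s.map (· ^ 2)).sum := by
  induction s using Multiset.induction with
  | empty => simp
  | cons a t ih =>
    have ha : 0 ≤ a := hs a (Multiset.mem_cons_self a t)
    have ht : ∀ x ∈ t, 0 ≤ x := fun x hx => hs x (Multiset.mem_cons_of_mem hx)
    have hT : 0 ≤ t.sum := Multiset.sum_nonneg ht
    have hS : 0 ≤ (t.map (· ^ 2)).sum := by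
      apply Multiset.sum_nonneg; intro x hx
      obtain ⟨y, _, rfl⟩ := Multiset.mem_map.mp hx; positivity
    have ih' := ih ht
    rcases eq_or_ne t 0 with rfl | hne
    · simp [sq_nonneg]
    · have hcard : 1 ≤ (Multiset.card t : ℝ) := by
        have : 1 ≤ Multiset.card t := Multiset.card_pos.mpr hne
        exact_mod_cast this
      simp only [Multiset.sum_cons, Multiset.card_cons, Multiset.map_cons]
      push_cast
      nlinarith [sq_nonneg ((Multiset.card t : ℝ) * a - t.sum)]

lemma ms_cs_c (s : Multiset ℂ) :
    normSq s.sum ≤ s.card * (s.map normSq).sum := by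
  have h1 : normSq s.sum = ‖s.sum‖ ^ 2 := by rw [normSq_eq_norm_sq]
  have h2 : ‖s.sum‖ ≤ (s.map (‖·‖)).sum := norm_multiset_sum_le s
  have h3 : ((s.map (‖·‖)).sum) ^ 2 ≤ (s.map (‖·‖)).card * ((s.map (‖·‖)).map (· ^ 2)).sum := by
    apply ms_cs; intro x hx
    obtain ⟨y, _, rfl⟩ := Multiset.mem_map.mp hx; positivity
  rw [Multiset.card_map, Multiset.map_map] at h3
  have h4 : (s.map ((· ^ 2) ∘ (‖·‖))).sum = (s.map normSq).sum := by
    congr 1; apply Multiset.map_congr rfl; intro x _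
    show ‖x‖ ^ 2 = normSq x
    rw [normSq_eq_norm_sq]
  calc normSq s.sum = ‖s.sum‖ ^ 2 := h1
    _ ≤ ((s.map (‖·‖)).sum) ^ 2 := by
        apply pow_le_pow_left₀ (norm_nonneg _) h2
    _ ≤ s.card * (s.map normSq).sum := by rw [← h4]; exact h3

/- ### logarithmic derivative -/

lemma eval_derivative_prod (s : Multiset ℂ) (w : ℂ) (hw : ∀ a ∈ s, w ≠ a) :
    eval w (derivative (s.map (fun a => X - C a)).prod) =
      eval w (s.map (fun a => X - C a)).prod * (s.map (fun a => (w - a)⁻¹)).sum := by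
  induction s using Multiset.induction with
  | empty => simp
  | cons a t ih =>
    have ha : w - a ≠ 0 := sub_ne_zero.mpr (hw a (Multiset.mem_cons_self a t))
    have ih' := ih (fun x hx => hw x (Multiset.mem_cons_of_mem hx))
    simp only [Multiset.map_cons, Multiset.prod_cons, Multiset.sum_cons, derivative_mul,
      eval_add, eval_mul, eval_sub, eval_X, eval_C, derivative_sub, derivative_X, derivative_C,
      eval_one, ih']
    field_simp
    rw [eval_zero]; ring

lemma re_mul_inv (u t : ℂ) (ht : t ≠ 0) :
    (u * t⁻¹).re = ((starRingEnd ℂ) u * t).re / normSq t := by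
  have h : normSq t ≠ 0 := (normSq_pos.mpr ht).ne'
  rw [Complex.inv_def, ← mul_assoc, Complex.re_mul_ofReal, div_eq_mul_inv]
  congr 1
  rw [← Complex.conj_re, map_mul, Complex.conj_conj]

/- ### Laguerre's theorem for half-planes -/

lemma laguerre (m : ℕ) (hm : 0 < m) (u : ℂ) (c : ℝ) (A : Polynomial ℂ) (hA : A ≠ 0)
    (hdeg : A.natDegree ≤ m) (hroots : ∀ z ∈ A.roots, (u * z).re ≤ c)
    (ζ w : ℂ) (hζ : ¬ (u * ζ).re ≤ c)
    (hw : eval w (C (m : ℂ) * A + (C ζ - X) * derivative A) = 0) :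
    (u * w).re ≤ c := by
  by_contra hcon
  push_neg at hcon
  set δ : ℝ := (u * w).re - c with hδdef
  have hδ : 0 < δ := sub_pos.mpr hcon
  by_cases heval : eval w A = 0
  · exact (hcon.not_ge (hroots w (mem_roots'.mpr ⟨hA, heval⟩))).elim
  have hsplit : A.roots.card = A.natDegree :=
    splits_iff_card_roots.mp (IsAlgClosed.splits A)
  set s : Multiset ℂ := A.roots with hs
  set W : Polynomial ℂ := (s.map (fun a => X - C a)).prod with hW
  have hfact : A = C A.leadingCoeff * W :=
    (C_leadingCoeff_mul_prod_multiset_X_sub_C hsplit).symm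
  have hws : ∀ a ∈ s, w ≠ a := by
    rintro a ha rfl
    exact heval (isRoot_of_mem_roots ha)
  have hevalA : eval w A = A.leadingCoeff * eval w W := by
    conv_lhs => rw [hfact, eval_mul, eval_C]
  have hWne : eval w W ≠ 0 := by
    intro h0; rw [hevalA, h0, mul_zero] at heval; exact heval rfl
  set S : ℂ := (s.map (fun a => (w - a)⁻¹)).sum with hSdef
  have hevalA' : eval w (derivative A) = A.leadingCoeff * (eval w W * S) := by
    conv_lhs => rw [hfact, derivative_C_mul, eval_C_mul, eval_derivative_prod s w hws]
  have heq : (m : ℂ) + (ζ - w) * S = 0 := by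
    have h0 : eval w (C (m : ℂ) * A + (C ζ - X) * derivative A) =
        A.leadingCoeff * eval w W * ((m : ℂ) + (ζ - w) * S) := by
      simp only [eval_add, eval_mul, eval_C, eval_sub, eval_X, hevalA, hevalA']
      ring
    rw [h0] at hw
    have hlc : A.leadingCoeff ≠ 0 := leadingCoeff_ne_zero.mpr hA
    rcases mul_eq_zero.mp hw with h | h
    · rcases mul_eq_zero.mp h with h | h
      · exact absurd h hlc
      · exact absurd h hWne
    · exact h
  have hmne : (m : ℂ) ≠ 0 := Nat.cast_ne_zero.mpr hm.ne'
  have hSne : S ≠ 0 := by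
    intro h0; rw [h0, mul_zero, add_zero] at heq
    exact hmne heq
  have hwζ : w - ζ = (m : ℂ) * S⁻¹ := by
    rw [eq_mul_inv_iff_mul_eq₀ hSne]
    linear_combination -heq
  have hpt : ∀ a ∈ s, δ * normSq ((w - a)⁻¹) ≤ ((starRingEnd ℂ) u * (w - a)⁻¹).re := by
    intro a ha
    have hane : w - a ≠ 0 := sub_ne_zero.mpr (hws a ha)
    have h2 : δ ≤ (u * (w - a)).re := by
      have h3 : (u * (w - a)).re = (u * w).re - (u * a).re := by
        rw [mul_sub, Complex.sub_re]
      have h1 : (u * a).re ≤ c := hroots a ha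
      rw [h3, hδdef]; linarith
    rw [re_mul_inv ((starRingEnd ℂ) u) (w - a) hane, Complex.conj_conj,
      map_inv₀ normSq, div_eq_mul_inv]
    have hnsq : (0:ℝ) < normSq (w - a) := normSq_pos.mpr hane
    have : (0:ℝ) ≤ (normSq (w-a))⁻¹ := by positivity
    exact mul_le_mul_of_nonneg_right h2 this
  have hreS : ((starRingEnd ℂ) u * S).re
      = (s.map (fun a => ((starRingEnd ℂ) u * (w - a)⁻¹).re)).sum := by
    rw [hSdef, ← Multiset.sum_map_mul_left]
    exact (map_multiset_sum Complex.reAddGroupHom _).trans (by rw [Multiset.map_map]; rfl)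
  set Sn : ℝ := (s.map (fun a => normSq ((w - a)⁻¹))).sum with hSn
  have hsum1 : δ * Sn ≤ ((starRingEnd ℂ) u * S).re := by
    rw [hreS, hSn, ← Multiset.sum_map_mul_left]
    apply Multiset.sum_map_le_sum_map
    intro a ha
    exact hpt a ha
  have hcs : normSq S ≤ (s.card : ℝ) * Sn := by
    have := ms_cs_c (s.map (fun a => (w - a)⁻¹))
    rwa [Multiset.card_map, Multiset.map_map] at this
  have hcard : (s.card : ℝ) ≤ (m : ℝ) := by
    exact_mod_cast le_trans (le_of_eq hsplit) hdeg
  have hSnn : 0 ≤ Sn := by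
    rw [hSn]; apply Multiset.sum_nonneg; intro x hx
    obtain ⟨y, _, rfl⟩ := Multiset.mem_map.mp hx; exact normSq_nonneg _
  have hsum : δ * normSq S ≤ (m:ℝ) * ((starRingEnd ℂ) u * S).re := by
    calc δ * normSq S ≤ δ * ((s.card : ℝ) * Sn) := by
          apply mul_le_mul_of_nonneg_left hcs hδ.le
      _ ≤ (m:ℝ) * (δ * Sn) := by
          nlinarith [mul_le_mul_of_nonneg_right hcard (mul_nonneg hδ.le hSnn)]
      _ ≤ (m:ℝ) * ((starRingEnd ℂ) u * S).re := by
          apply mul_le_mul_of_nonneg_left hsum1 (by positivity)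
  have hSpos : (0:ℝ) < normSq S := normSq_pos.mpr hSne
  have hfin : δ ≤ (u * (w - ζ)).re := by
    have h4 : (u * (w - ζ)).re = (m:ℝ) * ((starRingEnd ℂ) u * S).re / normSq S := by
      rw [hwζ]
      have h5 : u * ((m:ℂ) * S⁻¹) = ((m:ℕ):ℂ) * (u * S⁻¹) := by push_cast; ring
      have h6 : (((m:ℕ):ℂ) * (u * S⁻¹)).re = (m:ℝ) * (u * S⁻¹).re := by
        simp
      rw [h5, h6, re_mul_inv u S hSne, mul_div_assoc]
    rw [h4, le_div_iff₀ hSpos]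
    linarith [hsum]
  have h5 : (u * (w - ζ)).re = (u * w).re - (u * ζ).re := by
    rw [mul_sub, Complex.sub_re]
  have : (u * ζ).re ≤ c := by rw [hδdef] at hfin; linarith [hfin, h5 ▸ hfin]
  exact hζ this

/- ### the apolarity pairing -/

noncomputable def phiPair (m : ℕ) (A R : Polynomial ℂ) : ℂ :=
  ∑ k ∈ Finset.range (m+1),
    (-1)^k * (k.factorial : ℂ) * ((m-k).factorial : ℂ) * A.coeff k * R.coeff (m-k)

lemma coeff_X_mul_deriv (A : Polynomial ℂ) (k : ℕ) :
    (X * derivative A).coeff k = (k : ℂ) * A.coeff k := by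
  cases k with
  | zero => simp [mul_coeff_zero]
  | succ n => rw [coeff_X_mul, coeff_derivative]; push_cast; ring

lemma graceStep (m : ℕ) (A R₁ : Polynomial ℂ) (r : ℂ) (hR₁ : R₁.coeff (m+1) = 0) :
    phiPair m (C ((m+1 : ℕ) : ℂ) * A + (C r - X) * derivative A) R₁
      = phiPair (m+1) A ((X - C r) * R₁) := by
  set a := A.coeff with ha
  set c := R₁.coeff with hc
  have hB : ∀ k, k ≤ m → (C ((m+1 : ℕ) : ℂ) * A + (C r - X) * derivative A).coeff k
      = ((m+1-k : ℕ) : ℂ) * a k + r * ((k+1 : ℕ) : ℂ) * a (k+1) := by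
    intro k hk
    rw [coeff_add, coeff_C_mul, sub_mul, coeff_sub, coeff_C_mul, coeff_derivative,
      coeff_X_mul_deriv]
    have hcast : ((m+1-k : ℕ) : ℂ) = ((m : ℂ) + 1) - (k : ℂ) := by
      rw [Nat.cast_sub (by omega)]; push_cast; ring
    rw [hcast]; push_cast; ring
  have hXR : ∀ i, ((X - C r) * R₁).coeff i = (X * R₁).coeff i - r * c i := by
    intro i; rw [sub_mul, coeff_sub, coeff_C_mul, hc]
  have L1 : phiPair m (C ((m+1 : ℕ) : ℂ) * A + (C r - X) * derivative A) R₁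
      = ∑ k ∈ Finset.range (m+1),
          ((-1)^k * (k.factorial : ℂ) * (((m+1-k).factorial : ℕ) : ℂ) * a k * c (m-k)
           + (-1)^k * (((k+1).factorial : ℕ) : ℂ) * (((m-k).factorial : ℕ) : ℂ) * a (k+1)
              * (r * c (m-k))) := by
    unfold phiPair
    apply Finset.sum_congr rfl
    intro k hk
    have hk' : k ≤ m := Nat.lt_succ_iff.mp (Finset.mem_range.mp hk)
    rw [hB k hk']
    have hf1 : (((m+1-k).factorial : ℕ) : ℂ)
        = ((m+1-k : ℕ) : ℂ) * (((m-k).factorial : ℕ) : ℂ) := by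
      have h1 : m+1-k = (m-k)+1 := by omega
      rw [h1, Nat.factorial_succ]; push_cast; ring
    have hf2 : (((k+1).factorial : ℕ) : ℂ) = ((k+1 : ℕ) : ℂ) * ((k.factorial : ℕ) : ℂ) := by
      rw [Nat.factorial_succ]; push_cast; ring
    rw [hf1, hf2]; push_cast; ring
  have R1eq : phiPair (m+1) A ((X - C r) * R₁)
      = (∑ k ∈ Finset.range (m+2),
          (-1)^k * (k.factorial : ℂ) * (((m+1-k).factorial : ℕ) : ℂ) * a k
            * (X * R₁).coeff (m+1-k))
        - ∑ k ∈ Finset.range (m+2),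
          (-1)^k * (k.factorial : ℂ) * (((m+1-k).factorial : ℕ) : ℂ) * a k
            * (r * c (m+1-k)) := by
    unfold phiPair
    rw [← Finset.sum_sub_distrib]
    apply Finset.sum_congr rfl
    intro k hk
    rw [hXR]; ring
  have R2 : (∑ k ∈ Finset.range (m+2),
      (-1)^k * (k.factorial : ℂ) * (((m+1-k).factorial : ℕ) : ℂ) * a k
        * (X * R₁).coeff (m+1-k))
      = ∑ k ∈ Finset.range (m+1),
        (-1)^k * (k.factorial : ℂ) * (((m+1-k).factorial : ℕ) : ℂ) * a k * c (m-k) := by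
    rw [Finset.sum_range_succ]
    have h0 : (X * R₁).coeff (m+1-(m+1)) = 0 := by simp [mul_coeff_zero]
    rw [h0, mul_zero, add_zero]
    apply Finset.sum_congr rfl
    intro k hk
    have hk' : k ≤ m := Nat.lt_succ_iff.mp (Finset.mem_range.mp hk)
    have h1 : m+1-k = (m-k)+1 := by omega
    rw [h1, coeff_X_mul, hc]
  have R3 : (∑ k ∈ Finset.range (m+2),
      (-1)^k * (k.factorial : ℂ) * (((m+1-k).factorial : ℕ) : ℂ) * a k * (r * c (m+1-k)))
      = ∑ k ∈ Finset.range (m+1),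
        -((-1)^k * (((k+1).factorial : ℕ) : ℂ) * (((m-k).factorial : ℕ) : ℂ) * a (k+1)
          * (r * c (m-k))) := by
    rw [Finset.sum_range_succ']
    have h0 : c (m+1-0) = 0 := by simpa using hR₁
    rw [h0]
    simp only [mul_zero, add_zero]
    apply Finset.sum_congr rfl
    intro k hk
    have h1 : m+1-(k+1) = m-k := by omega
    rw [h1, pow_succ]
    ring
  rw [L1, R1eq, R2, R3, Finset.sum_neg_distrib, sub_neg_eq_add, ← Finset.sum_add_distrib]

/- ### Grace's apolarity theorem for half-planes -/

lemma grace : ∀ m : ℕ, 0 < m → ∀ (u : ℂ) (c : ℝ) (A R : Polynomial ℂ), A ≠ 0 →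
    A.natDegree ≤ m → (∀ z ∈ A.roots, (u * z).re ≤ c) → R.natDegree = m →
    phiPair m A R = 0 → ∃ z ∈ R.roots, (u * z).re ≤ c := by
  intro m
  induction m with
  | zero => omega
  | succ m ih =>
    intro _ u c A R hA hdeg hroots hRdeg hphi
    have hRne : R ≠ 0 := fun h => by simp [h] at hRdeg
    have hRcard : R.roots.card = m + 1 := by
      rw [splits_iff_card_roots.mp (IsAlgClosed.splits R), hRdeg]
    have hc1 : R.coeff (m+1) ≠ 0 := by
      have := leadingCoeff_ne_zero.mpr hRne
      rwa [leadingCoeff, hRdeg] at this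
    rcases Nat.eq_zero_or_pos m with rfl | hm
    · obtain ⟨r, hrmem⟩ := Multiset.card_pos_iff_exists_mem.mp (by rw [hRcard]; norm_num)
      refine ⟨r, hrmem, ?_⟩
      have hroot : eval r R = 0 := isRoot_of_mem_roots hrmem
      have hev : R.coeff 0 + R.coeff 1 * r = 0 := by
        have h2 : eval r R = ∑ i ∈ Finset.range 2, R.coeff i * r ^ i := by
          rw [eval_eq_sum_range, hRdeg]
        rw [h2] at hroot
        simpa [Finset.sum_range_succ] using hroot
      have hphi' : A.coeff 0 * R.coeff 1 - A.coeff 1 * R.coeff 0 = 0 := by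
        have := hphi
        unfold phiPair at this
        simpa [Finset.sum_range_succ, sub_eq_add_neg] using this
      by_cases hA1 : A.coeff 1 = 0
      · exfalso
        have hAdeg : A.natDegree = 0 := by
          by_contra h
          have h1 : A.natDegree = 1 := by omega
          have h2 := leadingCoeff_ne_zero.mpr hA
          rw [leadingCoeff, h1] at h2
          exact h2 hA1
        have hA0 : A.coeff 0 ≠ 0 := by
          have := leadingCoeff_ne_zero.mpr hA
          rwa [leadingCoeff, hAdeg] at this
        rw [hA1, zero_mul, sub_zero] at hphi'
        rcases mul_eq_zero.mp hphi' with h | h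
        · exact hA0 h
        · exact hc1 h
      · have hAdeg : A.natDegree = 1 := le_antisymm hdeg (le_natDegree_of_ne_zero hA1)
        have hα : eval (-(A.coeff 0 / A.coeff 1)) A = 0 := by
          have h2 : eval (-(A.coeff 0 / A.coeff 1)) A
              = ∑ i ∈ Finset.range 2, A.coeff i * (-(A.coeff 0 / A.coeff 1)) ^ i := by
            rw [eval_eq_sum_range, hAdeg]
          rw [h2]
          simp only [Finset.sum_range_succ, Finset.sum_range_zero, pow_zero, pow_one]
          have h3 : A.coeff 1 * (A.coeff 0 / A.coeff 1) = A.coeff 0 := by field_simp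
          linear_combination -h3
        have hαmem : -(A.coeff 0 / A.coeff 1) ∈ A.roots := mem_roots'.mpr ⟨hA, hα⟩
        have hbound := hroots _ hαmem
        have hreq : r = -(A.coeff 0 / A.coeff 1) := by
          have hr' : r = -(R.coeff 0 / R.coeff 1) := by
            field_simp
            linear_combination hev
          rw [hr']
          have h3 : A.coeff 0 * R.coeff 1 = A.coeff 1 * R.coeff 0 := by
            linear_combination hphi'
          field_simp
          linear_combination h3
        rwa [hreq]
    · by_contra hcon
      push_neg at hcon
      obtain ⟨r, hrmem⟩ := Multiset.card_pos_iff_exists_mem.mp (by rw [hRcard]; omega)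
      have hr : ¬ (u * r).re ≤ c := (hcon r hrmem).not_ge
      have hroot : IsRoot R r := isRoot_of_mem_roots hrmem
      set R₁ : Polynomial ℂ := R /ₘ (X - C r) with hR₁def
      have hfac : (X - C r) * R₁ = R := mul_divByMonic_eq_iff_isRoot.mpr hroot
      have hR₁ne : R₁ ≠ 0 := by
        intro h; rw [h, mul_zero] at hfac; exact hRne hfac.symm
      have hdegR₁ : R₁.natDegree = m := by
        have h1 := natDegree_mul (X_sub_C_ne_zero r) hR₁ne
        rw [hfac, natDegree_X_sub_C, hRdeg] at h1
        omega
      set B : Polynomial ℂ := C ((m+1 : ℕ) : ℂ) * A + (C r - X) * derivative A with hBdef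
      have hphiB : phiPair m B R₁ = 0 := by
        rw [hBdef, graceStep m A R₁ r (coeff_eq_zero_of_natDegree_lt (by omega)), hfac, hphi]
      have hCne : C ((m+1 : ℕ) : ℂ) ≠ 0 := by
        simp only [ne_eq, C_eq_zero, Nat.cast_eq_zero]
        omega
      have hBne : B ≠ 0 := by
        intro hB0
        have hd : derivative A ≠ 0 := by
          intro h
          rw [hBdef, h, mul_zero, add_zero] at hB0
          exact (mul_ne_zero hCne hA) hB0
        have hdpos : 0 < A.natDegree := by
          by_contra h
          push_neg at h
          have h1 : A.natDegree = 0 := by omega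
          have h2 := eq_C_of_natDegree_eq_zero h1
          rw [h2, derivative_C] at hd
          exact hd rfl
        obtain ⟨α, hα⟩ := Complex.exists_root (natDegree_pos_iff_degree_pos.mp hdpos)
        have hαmem : α ∈ A.roots := mem_roots'.mpr ⟨hA, hα⟩
        have hαc := hroots α hαmem
        have hαr : α ≠ r := fun h => hr (h ▸ hαc)
        have heqpoly : (X - C r) * derivative A = C ((m+1 : ℕ) : ℂ) * A := by
          rw [hBdef] at hB0
          linear_combination -hB0
        have hrhs_ne : C ((m+1 : ℕ) : ℂ) * A ≠ 0 := mul_ne_zero hCne hA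
        have hlhs_ne : (X - C r) * derivative A ≠ 0 := by rw [heqpoly]; exact hrhs_ne
        have hmul1 : ((X - C r) * derivative A).rootMultiplicity α
            = (X - C r).rootMultiplicity α + (derivative A).rootMultiplicity α :=
          rootMultiplicity_mul hlhs_ne
        have hx : (X - C r).rootMultiplicity α = 0 := by
          apply rootMultiplicity_eq_zero
          simp [IsRoot, sub_ne_zero.mpr hαr]
        have hda : (derivative A).rootMultiplicity α = A.rootMultiplicity α - 1 :=
          derivative_rootMultiplicity_of_root hα
        have hmul2 : (C ((m+1 : ℕ) : ℂ) * A).rootMultiplicity α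
            = A.rootMultiplicity α := by
          have hnr : ¬ IsRoot (C ((m+1 : ℕ) : ℂ)) α := by
            simp only [IsRoot, eval_C]
            exact_mod_cast Nat.succ_ne_zero m
          rw [rootMultiplicity_mul hrhs_ne, rootMultiplicity_eq_zero hnr]
          omega
        have hpos : 0 < A.rootMultiplicity α := (rootMultiplicity_pos hA).mpr hα
        rw [heqpoly, hmul2] at hmul1
        omega
      have hdegB : B.natDegree ≤ m := by
        apply natDegree_le_iff_coeff_eq_zero.mpr
        intro k hk
        have hcoeff : B.coeff k = ((m+1 : ℕ) : ℂ) * A.coeff k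
            + (r * (A.coeff (k+1) * (k+1)) - (k : ℂ) * A.coeff k) := by
          rw [hBdef, coeff_add, coeff_C_mul, sub_mul, coeff_sub, coeff_C_mul,
            coeff_derivative, coeff_X_mul_deriv]
        rcases eq_or_lt_of_le (Nat.succ_le_of_lt hk) with h | h
        · have hk1 : k = m + 1 := h.symm
          have ha2 : A.coeff (k+1) = 0 :=
            coeff_eq_zero_of_natDegree_lt (by omega)
          rw [hcoeff, ha2, hk1]
          push_cast
          ring
        · have ha1 : A.coeff k = 0 := coeff_eq_zero_of_natDegree_lt (by omega)
          have ha2 : A.coeff (k+1) = 0 := coeff_eq_zero_of_natDegree_lt (by omega)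
          rw [hcoeff, ha1, ha2]
          ring
      have hBroots : ∀ z ∈ B.roots, (u * z).re ≤ c := by
        intro z hz
        apply laguerre (m+1) (Nat.succ_pos m) u c A hA hdeg hroots r z hr
        have h1 := isRoot_of_mem_roots hz
        rw [hBdef] at h1
        exact_mod_cast h1
      obtain ⟨z, hzmem, hzc⟩ := ih hm u c B R₁ hBne hdegB hBroots hdegR₁ hphiB
      have hzR : z ∈ R.roots := by
        rw [← hfac, roots_mul (by rw [hfac]; exact hRne)]
        exact Multiset.mem_add.mpr (Or.inr hzmem)
      exact (hcon z hzR).not_ge hzc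

/- ### reality of roots transfers to ℝ -/

lemma real_roots_split (N : ℕ) : ∀ p : Polynomial ℝ, p.natDegree ≤ N →
    (∀ z ∈ (p.map (algebraMap ℝ ℂ)).roots, ∃ x : ℝ, (x : ℂ) = z) →
    p.Splits := by
  induction N with
  | zero => exact fun p h _ => Splits.of_natDegree_le_one (le_trans h (by omega))
  | succ N ih =>
    intro p hdeg hroots
    by_cases hd : p.natDegree = 0
    · exact Splits.of_natDegree_le_one (by omega)
    · have hp : p ≠ 0 := fun h => hd (by simp [h])
      have hpc : p.map (algebraMap ℝ ℂ) ≠ 0 :=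
        (Polynomial.map_ne_zero_iff (algebraMap ℝ ℂ).injective).mpr hp
      have hdegc : (p.map (algebraMap ℝ ℂ)).natDegree = p.natDegree := natDegree_map _
      have hdpos : 0 < (p.map (algebraMap ℝ ℂ)).natDegree := by
        rw [hdegc]; omega
      obtain ⟨z, hz⟩ := Complex.exists_root (natDegree_pos_iff_degree_pos.mp hdpos)
      obtain ⟨x, hx⟩ := hroots z (mem_roots'.mpr ⟨hpc, hz⟩)
      have hxr : p.IsRoot x := by
        have h1 : (p.map (algebraMap ℝ ℂ)).eval (x : ℂ) = ((p.eval x : ℝ) : ℂ) := by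
          rw [eval_map]; exact (eval₂_at_apply _ x).trans rfl
        have h2 : (p.map (algebraMap ℝ ℂ)).eval (x : ℂ) = 0 := by rw [hx]; exact hz
        rw [h1] at h2
        exact_mod_cast h2
      set q : Polynomial ℝ := p /ₘ (X - C x) with hq
      have hfac : (X - C x) * q = p := mul_divByMonic_eq_iff_isRoot.mpr hxr
      have hqne : q ≠ 0 := fun h => hp (by rw [← hfac, h, mul_zero])
      have hqdeg : q.natDegree ≤ N := by
        have h1 := natDegree_mul (X_sub_C_ne_zero x) hqne
        rw [hfac, natDegree_X_sub_C] at h1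
        omega
      have hqroots : ∀ z ∈ (q.map (algebraMap ℝ ℂ)).roots, ∃ y : ℝ, (y : ℂ) = z := by
        intro w hw
        apply hroots
        have hmap : p.map (algebraMap ℝ ℂ)
            = (X - C ((algebraMap ℝ ℂ) x)) * q.map (algebraMap ℝ ℂ) := by
          rw [← hfac, Polynomial.map_mul, Polynomial.map_sub, map_X, map_C]
        rw [hmap, roots_mul (by rw [← hmap]; exact hpc)]
        exact Multiset.mem_add.mpr (Or.inr hw)
      rw [← hfac]
      exact (Splits.X_sub_C _).mul (ih q hqdeg hqroots)

lemma coeff_schurSzego {K : Type*} [Field K] (n : ℕ) (P Q : Polynomial K) (k : ℕ) :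
    (schurSzego n P Q).coeff k
      = if k ≤ n then P.coeff k * Q.coeff k / (n.choose k : K) else 0 := by
  unfold schurSzego
  rw [finset_sum_coeff]
  simp only [coeff_C_mul, coeff_X_pow, mul_ite, mul_one, mul_zero]
  rw [Finset.sum_ite_eq (Finset.range (n+1)) k
    (fun i => P.coeff i * Q.coeff i / (n.choose i : K))]
  simp [Nat.lt_succ_iff]

end SchurSzegoAux

open SchurSzegoAux Complex

theorem schurSzego_hyperbolic_interval (n : ℕ) (P Q : Polynomial ℝ)
    (hPdeg : P.natDegree = n) (hQdeg : Q.natDegree = n)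
    (hPhyp : P.roots.card = n) (hQhyp : Q.roots.card = n)
    (hQneg : ∀ β ∈ Q.roots, β < 0)
    (M m : ℝ)
    (hM : IsGreatest {x : ℝ | ∃ α ∈ P.roots, ∃ β ∈ Q.roots, x = α * β} M)
    (hm : IsLeast {x : ℝ | ∃ α ∈ P.roots, ∃ β ∈ Q.roots, x = α * β} m) :
    (schurSzego n P Q).roots.card = n ∧
    ∀ x ∈ (schurSzego n P Q).roots, x ∈ Set.Icc (-M) (-m) := by
  classical
  obtain ⟨hMmem, hMub⟩ := hM
  obtain ⟨hmmem, hmlb⟩ := hm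
  obtain ⟨α₀, hα₀, β₀, hβ₀, hM0⟩ := hMmem
  have hn : 0 < n := by
    rw [← hPhyp]
    exact Multiset.card_pos_iff_exists_mem.mpr ⟨α₀, hα₀⟩
  have hPne : P ≠ 0 := fun h => by rw [h, natDegree_zero] at hPdeg; omega
  have hQne : Q ≠ 0 := fun h => by rw [h, natDegree_zero] at hQdeg; omega
  have hPs : P.Splits := splits_iff_card_roots.mpr (by rw [hPhyp, hPdeg])
  have hQs : Q.Splits := splits_iff_card_roots.mpr (by rw [hQhyp, hQdeg])
  set ι := algebraMap ℝ ℂ with hι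
  set Pc := P.map ι with hPc
  set Qc := Q.map ι with hQc
  set S := schurSzego n P Q with hSdef
  set Sc := S.map ι with hScdef
  have hPcne : Pc ≠ 0 := (Polynomial.map_ne_zero_iff ι.injective).mpr hPne
  have hQcne : Qc ≠ 0 := (Polynomial.map_ne_zero_iff ι.injective).mpr hQne
  have hPcroots : Pc.roots = P.roots.map ι := hPs.roots_map ι
  have hQcroots : Qc.roots = Q.roots.map ι := hQs.roots_map ι
  have hPcdeg : Pc.natDegree = n := by rw [hPc, natDegree_map, hPdeg]
  have hQcdeg : Qc.natDegree = n := by rw [hQc, natDegree_map, hQdeg]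
  have hScoeff : ∀ k, S.coeff k
      = if k ≤ n then P.coeff k * Q.coeff k / (n.choose k : ℝ) else 0 :=
    coeff_schurSzego n P Q
  have hPn : P.coeff n ≠ 0 := by
    have := leadingCoeff_ne_zero.mpr hPne
    rwa [leadingCoeff, hPdeg] at this
  have hQn : Q.coeff n ≠ 0 := by
    have := leadingCoeff_ne_zero.mpr hQne
    rwa [leadingCoeff, hQdeg] at this
  have hQ0 : Q.coeff 0 ≠ 0 := by
    intro h
    have h0 : (0:ℝ) ∈ Q.roots := by
      refine mem_roots'.mpr ⟨hQne, ?_⟩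
      rwa [IsRoot, ← coeff_zero_eq_eval_zero]
    exact absurd (hQneg 0 h0) (lt_irrefl 0)
  have hSn : S.coeff n = P.coeff n * Q.coeff n := by
    rw [hScoeff n, if_pos le_rfl, Nat.choose_self]
    simp
  have hSne0 : S.coeff n ≠ 0 := by rw [hSn]; exact mul_ne_zero hPn hQn
  have hSdeg : S.natDegree = n := by
    apply le_antisymm
    · apply natDegree_le_iff_coeff_eq_zero.mpr
      intro k hk
      rw [hScoeff k, if_neg (by omega)]
    · exact le_natDegree_of_ne_zero hSne0
  have hScdeg : Sc.natDegree = n := by rw [hScdef, natDegree_map, hSdeg]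
  have hevalmap : ∀ (p : Polynomial ℝ) (x : ℝ),
      (p.map ι).eval (x : ℂ) = ((p.eval x : ℝ) : ℂ) := by
    intro p x
    rw [eval_map]; exact (eval₂_at_apply _ x).trans rfl
  -- extremes of roots of P
  have hPfin : P.roots.toFinset.Nonempty := ⟨α₀, Multiset.mem_toFinset.mpr hα₀⟩
  set amax := P.roots.toFinset.max' hPfin with hamax
  set amin := P.roots.toFinset.min' hPfin with hamin
  have hamax_mem : amax ∈ P.roots := Multiset.mem_toFinset.mp (Finset.max'_mem _ _)
  have hamin_mem : amin ∈ P.roots := Multiset.mem_toFinset.mp (Finset.min'_mem _ _)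
  have hamax_ub : ∀ α ∈ P.roots, α ≤ amax :=
    fun α h => Finset.le_max' _ _ (Multiset.mem_toFinset.mpr h)
  have hamin_lb : ∀ α ∈ P.roots, amin ≤ α :=
    fun α h => Finset.min'_le _ _ (Multiset.mem_toFinset.mpr h)
  -- the key statement about complex roots
  have key : ∀ γ : ℂ, eval γ Sc = 0 → ∃ x : ℝ, (x:ℂ) = γ ∧ -M ≤ x ∧ x ≤ -m := by
    intro γ hγ
    by_cases hγ0 : γ = 0
    · have h0 : S.coeff 0 = 0 := by
        have h1 : eval ((0:ℝ):ℂ) Sc = ((eval 0 S : ℝ) : ℂ) := hevalmap S 0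
        rw [show ((0:ℝ):ℂ) = (0:ℂ) by norm_num, ← hγ0, hγ] at h1
        have h2 : eval 0 S = 0 := by exact_mod_cast h1.symm
        rwa [coeff_zero_eq_eval_zero]
      have hP0 : P.coeff 0 = 0 := by
        have h1 := hScoeff 0
        rw [if_pos (Nat.zero_le n), h0] at h1
        have h2 : P.coeff 0 * Q.coeff 0 = 0 := by
          have hch : ((n.choose 0 : ℕ) : ℝ) = 1 := by simp
          rw [hch, div_one] at h1
          exact h1.symm
        rcases mul_eq_zero.mp h2 with h | h
        · exact h
        · exact absurd h hQ0
      have h0mem : (0:ℝ) ∈ P.roots := by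
        refine mem_roots'.mpr ⟨hPne, ?_⟩
        rw [IsRoot, ← coeff_zero_eq_eval_zero]
        exact hP0
      have h0S : (0:ℝ) ∈ {x | ∃ α ∈ P.roots, ∃ β ∈ Q.roots, x = α * β} :=
        ⟨0, h0mem, β₀, hβ₀, by ring⟩
      exact ⟨0, by simp [hγ0], by linarith [hMub h0S], by linarith [hmlb h0S]⟩
    · -- γ ≠ 0 : build the apolar polynomial
      set Rg : Polynomial ℂ :=
        ∑ j ∈ Finset.range (n+1), C (Qc.coeff (n-j) * (-γ)^(n-j)) * X^j with hRgdef
      have hRgcoeff : ∀ j, Rg.coeff j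
          = if j ≤ n then Qc.coeff (n-j) * (-γ)^(n-j) else 0 := by
        intro j
        rw [hRgdef, finset_sum_coeff]
        simp only [coeff_C_mul, coeff_X_pow, mul_ite, mul_one, mul_zero]
        rw [Finset.sum_ite_eq (Finset.range (n+1)) j
          (fun i => Qc.coeff (n-i) * (-γ)^(n-i))]
        simp [Nat.lt_succ_iff]
      have hQc0 : Qc.coeff 0 ≠ 0 := by
        rw [hQc, coeff_map]
        simpa [hι] using hQ0
      have hQcn : Qc.coeff n ≠ 0 := by
        rw [hQc, coeff_map]
        simpa [hι] using hQn
      have hγne : (-γ) ≠ 0 := neg_ne_zero.mpr hγ0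
      have hRgn : Rg.coeff n ≠ 0 := by
        rw [hRgcoeff n, if_pos le_rfl, Nat.sub_self]
        simpa using hQc0
      have hRg0 : Rg.coeff 0 ≠ 0 := by
        rw [hRgcoeff 0, if_pos (Nat.zero_le n), Nat.sub_zero]
        exact mul_ne_zero hQcn (pow_ne_zero n hγne)
      have hRgdeg : Rg.natDegree = n := by
        apply le_antisymm
        · apply natDegree_le_iff_coeff_eq_zero.mpr
          intro k hk
          rw [hRgcoeff k, if_neg (by omega)]
        · exact le_natDegree_of_ne_zero hRgn
      have hRgne : Rg ≠ 0 := by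
        intro h; rw [h, coeff_zero] at hRgn; exact hRgn rfl
      -- apolarity
      have hphi : phiPair n Pc Rg = 0 := by
        have h1 : phiPair n Pc Rg = (n.factorial : ℂ) * eval γ Sc := by
          unfold phiPair
          rw [eval_eq_sum_range, hScdeg, Finset.mul_sum]
          apply Finset.sum_congr rfl
          intro k hk
          have hkn : k ≤ n := Nat.lt_succ_iff.mp (Finset.mem_range.mp hk)
          rw [hRgcoeff (n-k), if_pos (Nat.sub_le n k)]
          have h3 : n - (n-k) = k := by omega
          rw [h3]
          have h4 : Sc.coeff k = Pc.coeff k * Qc.coeff k / ((n.choose k : ℕ) : ℂ) := by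
            rw [hScdef, coeff_map, hScoeff k, if_pos hkn, map_div₀, map_mul]
            rw [hPc, hQc, coeff_map, coeff_map]
            norm_num [hι]
          rw [h4]
          have h5 : ((n.choose k : ℕ) : ℂ) ≠ 0 :=
            Nat.cast_ne_zero.mpr (Nat.choose_pos hkn).ne'
          have h6 : ((n.choose k : ℕ) : ℂ) * ((k.factorial : ℕ):ℂ)
              * (((n-k).factorial : ℕ):ℂ) = ((n.factorial : ℕ):ℂ) := by
            exact_mod_cast congrArg (Nat.cast : ℕ → ℂ)
              (Nat.choose_mul_factorial_mul_factorial hkn)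
          have h7 : ((-1 : ℂ))^k * (-γ)^k = γ^k := by
            rw [← mul_pow, neg_one_mul, neg_neg]
          calc (-1:ℂ)^k * (k.factorial : ℂ) * ((n-k).factorial : ℂ) * Pc.coeff k
                * (Qc.coeff k * (-γ)^k)
              = (k.factorial : ℂ) * ((n-k).factorial : ℂ) * Pc.coeff k * Qc.coeff k
                  * ((-1:ℂ)^k * (-γ)^k) := by ring
            _ = (k.factorial : ℂ) * ((n-k).factorial : ℂ) * Pc.coeff k * Qc.coeff k
                  * γ^k := by rw [h7]
            _ = (n.factorial : ℂ) * (Pc.coeff k * Qc.coeff k / ((n.choose k : ℕ) : ℂ)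
                  * γ^k) := by
                rw [← h6]; field_simp
        rw [h1, hγ, mul_zero]
      -- description of roots of Rg
      have hRgroot : ∀ z ∈ Rg.roots, ∃ β ∈ Q.roots, z = -γ / ((β:ℝ) : ℂ) := by
        intro z hz
        have hz0 : z ≠ 0 := by
          rintro rfl
          have h1 : eval 0 Rg = 0 := isRoot_of_mem_roots hz
          rw [← coeff_zero_eq_eval_zero] at h1
          exact hRg0 h1
        have hev : eval z Rg = ∑ j ∈ Finset.range (n+1),
            Qc.coeff (n-j) * (-γ)^(n-j) * z^j := by
          rw [eval_eq_sum_range, hRgdeg]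
          apply Finset.sum_congr rfl
          intro j hj
          rw [hRgcoeff j, if_pos (Nat.lt_succ_iff.mp (Finset.mem_range.mp hj))]
        have hrev : eval z Rg = z^n * eval (-γ / z) Qc := by
          rw [hev, eval_eq_sum_range, hQcdeg, Finset.mul_sum]
          conv_rhs => rw [← Finset.sum_range_reflect]
          apply Finset.sum_congr rfl
          intro j hj
          have hjn : j ≤ n := Nat.lt_succ_iff.mp (Finset.mem_range.mp hj)
          have h2 : n + 1 - 1 - j = n - j := by omega
          rw [h2]
          have hzj : z^j * z^(n-j) = z^n := by
            rw [← pow_add]; congr 1; omega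
          calc Qc.coeff (n-j) * (-γ)^(n-j) * z^j
              = z^j * (Qc.coeff (n-j) * ((-γ)^(n-j) / z^(n-j) * z^(n-j))) := by
                rw [div_mul_cancel₀ _ (pow_ne_zero _ hz0)]; ring
            _ = z^n * (Qc.coeff (n-j) * (-γ / z)^(n-j)) := by
                rw [div_pow, ← hzj]; ring
        have hQzero : eval (-γ / z) Qc = 0 := by
          have h1 : eval z Rg = 0 := isRoot_of_mem_roots hz
          rw [hrev] at h1
          exact (mul_eq_zero.mp h1).resolve_left (pow_ne_zero n hz0)
        have hmem : -γ / z ∈ Qc.roots := mem_roots'.mpr ⟨hQcne, hQzero⟩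
        rw [hQcroots] at hmem
        obtain ⟨β, hβ, hβeq⟩ := Multiset.mem_map.mp hmem
        refine ⟨β, hβ, ?_⟩
        have hβne : ((β : ℝ) : ℂ) ≠ 0 := by
          exact_mod_cast (hQneg β hβ).ne
        have hβeq' : ((β : ℝ) : ℂ) = -γ / z := hβeq
        rw [eq_div_iff hβne]
        field_simp at hβeq'
        linear_combination hβeq'
      -- grace wrapper
      have hg : ∀ (u : ℂ) (c : ℝ), (∀ α ∈ P.roots, (u * (ι α)).re ≤ c) →
          ∃ β ∈ Q.roots, (u * (-γ / ((β:ℝ) : ℂ))).re ≤ c := by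
        intro u c hc
        obtain ⟨z, hzmem, hzc⟩ := grace n hn u c Pc Rg hPcne (le_of_eq hPcdeg)
          (by
            intro w hw
            rw [hPcroots] at hw
            obtain ⟨α, hα, rfl⟩ := Multiset.mem_map.mp hw
            exact hc α hα)
          hRgdeg hphi
        obtain ⟨β, hβ, rfl⟩ := hRgroot z hzmem
        exact ⟨β, hβ, hzc⟩
      have hιre : ∀ (β : ℝ) (w : ℂ), -γ / ((β:ℝ) : ℂ) = ((β⁻¹ : ℝ) : ℂ) * (-γ) := by
        intro β w
        rw [div_eq_mul_inv, Complex.ofReal_inv]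
        ring
      -- imaginary part
      have him1 : 0 ≤ γ.im := by
        obtain ⟨β, hβ, hle⟩ := hg Complex.I 0 (fun α hα => by
          simp [hι, Complex.mul_re])
        have hβneg := hQneg β hβ
        rw [hιre β 0] at hle
        have h1 : (Complex.I * (((β⁻¹:ℝ):ℂ) * (-γ))).re = -(β⁻¹ * (-γ.im)) := by
          simp [Complex.mul_re, Complex.mul_im]
        rw [h1] at hle
        have hβinv : β⁻¹ < 0 := inv_neg''.mpr hβneg
        nlinarith
      have him2 : γ.im ≤ 0 := by
        obtain ⟨β, hβ, hle⟩ := hg (-Complex.I) 0 (fun α hα => by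
          simp [hι, Complex.mul_re])
        have hβneg := hQneg β hβ
        rw [hιre β 0] at hle
        have h1 : ((-Complex.I) * (((β⁻¹:ℝ):ℂ) * (-γ))).re = β⁻¹ * (-γ.im) := by
          simp [Complex.mul_re, Complex.mul_im]
        rw [h1] at hle
        have hβinv : β⁻¹ < 0 := inv_neg''.mpr hβneg
        nlinarith
      have him : γ.im = 0 := le_antisymm him2 him1
      set x : ℝ := γ.re with hx
      have hγx : (x:ℂ) = γ := by
        apply Complex.ext
        · simp [hx]
        · simp [hx, him]
      have hdiv : ∀ β : ℝ, β ≠ 0 → -γ / ((β:ℝ) : ℂ) = ((-x/β : ℝ) : ℂ) := by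
        intro β hβ
        rw [← hγx]
        push_cast
        ring
      have hub : x ≤ -m := by
        obtain ⟨β, hβ, hle⟩ := hg 1 amax (fun α hα => by
          simpa [hι] using hamax_ub α hα)
        have hβneg := hQneg β hβ
        rw [hdiv β hβneg.ne, one_mul] at hle
        simp only [Complex.ofReal_re] at hle
        have h1 : amax * β ≤ -x := (div_le_iff_of_neg hβneg).mp hle
        have h2 : m ≤ amax * β := hmlb ⟨amax, hamax_mem, β, hβ, rfl⟩
        linarith
      have hlb : -M ≤ x := by
        obtain ⟨β, hβ, hle⟩ := hg (-1) (-amin) (fun α hα => by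
          have h := hamin_lb α hα
          rw [show ι α = ((α : ℝ) : ℂ) from rfl,
            show ((-1:ℂ)) * ((α : ℝ) : ℂ) = ((-α : ℝ) : ℂ) by push_cast; ring]
          simpa using h)
        have hβneg := hQneg β hβ
        rw [hdiv β hβneg.ne] at hle
        rw [show ((-1 : ℂ)) * ((-x/β : ℝ):ℂ) = ((x/β : ℝ):ℂ) by push_cast; ring] at hle
        simp only [Complex.ofReal_re] at hle
        have h1 : -amin * β ≤ x := (div_le_iff_of_neg hβneg).mp hle
        have h2 : amin * β ≤ M := hMub ⟨amin, hamin_mem, β, hβ, rfl⟩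
        linarith
      exact ⟨x, hγx, hlb, hub⟩
  -- conclude
  have hSsplits : S.Splits := by
    apply real_roots_split n S (le_of_eq hSdeg)
    intro z hz
    obtain ⟨x, hx, _, _⟩ := key z (isRoot_of_mem_roots hz)
    exact ⟨x, hx⟩
  constructor
  · rw [splits_iff_card_roots.mp hSsplits, hSdeg]
  · intro x hx
    have hev : eval ((x:ℝ):ℂ) Sc = 0 := by
      rw [hScdef, hevalmap S x]
      have : eval x S = 0 := isRoot_of_mem_roots hx
      exact_mod_cast this
    obtain ⟨y, hy, hy1, hy2⟩ := key ((x:ℝ):ℂ) hev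
    have hyx : y = x := by exact_mod_cast hy
    rw [hyx] at hy1 hy2
    exact Set.mem_Icc.mpr ⟨hy1, hy2⟩
end
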